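/- arXiv:1401.5828 — 2 statements merged into one kernel-verified Lean document; each statement's English description precedes it below -/
import Mathlib

section
/- For the binary symmetric Markov source with parameter p and Hamming distortion, the function D ↦ H(1 - p - D + 2pD) - H(D) is strictly decreasing on (0, 1/2) when p ∈ (0, 1/2), and equals 0 at D = 1/2. -/
noncomputable def binEnt (x : ℝ) : ℝ := -x * Real.log x - (1 - x) * Real.log (1 - x)

lemma binEnt_hasDerivAt {x : ℝ} (h0 : 0 < x) (h1 : x < 1) :
    HasDerivAt binEnt (Real.log (1 - x) - Real.log x) x := by
  have h1' : (0:ℝ) < 1 - x := by linarith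
  have d1 : HasDerivAt (fun y : ℝ => -y * Real.log y) (-(Real.log x + 1)) x := by
    have := ((hasDerivAt_id x).mul (Real.hasDerivAt_log h0.ne')).neg
    refine (this.congr_deriv ?_).congr_of_eventuallyEq (Filter.Eventually.of_forall fun y => ?_)
    · simp only [id_eq]
      field_simp
    · simp only [Pi.neg_apply, Pi.mul_apply, id_eq]; ring
  have du : HasDerivAt (fun y : ℝ => 1 - y) (-1 : ℝ) x := by
    exact ((hasDerivAt_const x (1:ℝ)).sub (hasDerivAt_id x)).congr_deriv (by ring)
  have dlog : HasDerivAt (fun y : ℝ => Real.log (1 - y)) ((1 - x)⁻¹ * (-1)) x :=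
    (Real.hasDerivAt_log h1'.ne').comp x du
  have d2 : HasDerivAt (fun y : ℝ => (1 - y) * Real.log (1 - y))
      (-Real.log (1 - x) - 1) x := by
    have := du.mul dlog
    refine this.congr_deriv ?_
    field_simp
    ring
  have := d1.sub d2
  refine this.congr_deriv ?_
  ring

theorem bsms_nrdf_strict_anti (p : ℝ) (hp : p ∈ Set.Ioo (0:ℝ) (1/2)) :
    StrictAntiOn (fun D : ℝ => binEnt (1 - p - D + 2 * p * D) - binEnt D)
      (Set.Ioo (0:ℝ) (1/2)) ∧
    binEnt (1 - p - (1/2) + 2 * p * (1/2)) - binEnt (1/2) = 0 := by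
  obtain ⟨hp0, hp2⟩ := hp
  have hderiv : ∀ D ∈ Set.Ioo (0:ℝ) (1/2),
      HasDerivAt (fun D : ℝ => binEnt (1 - p - D + 2 * p * D) - binEnt D)
        ((Real.log (1 - (1 - p - D + 2 * p * D)) - Real.log (1 - p - D + 2 * p * D))
          * (2 * p - 1) - (Real.log (1 - D) - Real.log D)) D := by
    intro D hD
    obtain ⟨hD0, hD2⟩ := hD
    set m := 1 - p - D + 2 * p * D with hm
    have hm0 : 0 < m := by nlinarith
    have hm1 : m < 1 := by nlinarith
    have hmD : HasDerivAt (fun D : ℝ => 1 - p - D + 2 * p * D) (2 * p - 1) D := by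
      have := ((hasDerivAt_const D (1 - p)).sub (hasDerivAt_id D)).add
        ((hasDerivAt_id D).const_mul (2 * p))
      refine this.congr_deriv ?_
      ring
    exact ((binEnt_hasDerivAt hm0 hm1).comp D hmD).sub
      (binEnt_hasDerivAt hD0 (by linarith))
  have hneg : ∀ D ∈ Set.Ioo (0:ℝ) (1/2),
      (Real.log (1 - (1 - p - D + 2 * p * D)) - Real.log (1 - p - D + 2 * p * D))
        * (2 * p - 1) - (Real.log (1 - D) - Real.log D) < 0 := by
    intro D hD
    obtain ⟨hD0, hD2⟩ := hD
    set m := 1 - p - D + 2 * p * D with hm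
    have hm0 : 0 < m := by nlinarith
    have hmh : 1/2 < m := by nlinarith
    have hm1 : m < 1 := by nlinarith
    have h1m : 0 < 1 - m := by linarith
    have h1D : 0 < 1 - D := by linarith
    have hA : Real.log (1 - m) < Real.log m := Real.log_lt_log h1m (by linarith)
    have key : Real.log (m * D) < Real.log ((1 - m) * (1 - D)) :=
      Real.log_lt_log (mul_pos hm0 hD0) (by nlinarith)
    rw [Real.log_mul hm0.ne' hD0.ne', Real.log_mul h1m.ne' h1D.ne'] at key
    nlinarith [mul_pos hp0 (sub_pos.mpr hA)]
  constructor
  · apply strictAntiOn_of_deriv_neg (convex_Ioo _ _)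
    · exact fun x hx => ((hderiv x hx).continuousAt).continuousWithinAt
    · intro x hx
      rw [interior_Ioo] at hx
      rw [(hderiv x hx).deriv]
      exact hneg x hx
  · have h : 1 - p - (1/2) + 2 * p * (1/2) = 1/2 := by ring
    rw [h, sub_self]
end

section
/- Given λ_1, ..., λ_p > 0 and D with 0 < D ≤ Σ λ_i, the allocation δ_i = min(ξ, λ_i) with ξ chosen so that Σ δ_i = D minimizes Σ_{i=1}^p (1/2)·log(λ_i/δ_i) over all allocations (δ_1, ..., δ_p) satisfying 0 < δ_i ≤ λ_i for all i and Σ δ_i = D. -/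
theorem waterfilling_optimal (p : ℕ) (l : Fin p → ℝ) (hpos : ∀ i, 0 < l i)
    (D : ℝ) (hD0 : 0 < D) (hDS : D ≤ ∑ i, l i)
    (ξ : ℝ) (hξ : 0 < ξ) (hsum : ∑ i, min ξ (l i) = D)
    (δ : Fin p → ℝ) (hδpos : ∀ i, 0 < δ i) (hδle : ∀ i, δ i ≤ l i)
    (hδsum : ∑ i, δ i = D) :
    ∑ i, (1/2 : ℝ) * Real.log (l i / min ξ (l i)) ≤
      ∑ i, (1/2 : ℝ) * Real.log (l i / δ i) := by
  have hm : ∀ i, 0 < min ξ (l i) := fun i => lt_min hξ (hpos i)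
  have key : ∀ i, Real.log (δ i) - Real.log (min ξ (l i)) ≤ (δ i - min ξ (l i)) / ξ := by
    intro i
    have h1 : Real.log (δ i) - Real.log (min ξ (l i)) = Real.log (δ i / min ξ (l i)) :=
      (Real.log_div (hδpos i).ne' (hm i).ne').symm
    have h2 : Real.log (δ i / min ξ (l i)) ≤ δ i / min ξ (l i) - 1 :=
      Real.log_le_sub_one_of_pos (div_pos (hδpos i) (hm i))
    have h3 : δ i / min ξ (l i) - 1 = (δ i - min ξ (l i)) / min ξ (l i) := by
      rw [sub_div, div_self (hm i).ne']
    have h4 : (δ i - min ξ (l i)) / min ξ (l i) ≤ (δ i - min ξ (l i)) / ξ := by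
      rcases le_total ξ (l i) with h | h
      · rw [min_eq_left h]
      · rw [min_eq_right h]
        have hd : δ i - l i ≤ 0 := by linarith [hδle i]
        rw [div_le_div_iff₀ (hpos i) hξ]
        nlinarith [hpos i]
    linarith [h1 ▸ h2, h3 ▸ h4]
  have hsum2 : ∑ i, (Real.log (δ i) - Real.log (min ξ (l i))) ≤
      ∑ i, (δ i - min ξ (l i)) / ξ := Finset.sum_le_sum (fun i _ => key i)
  have hz : ∑ i, (δ i - min ξ (l i)) / ξ = 0 := by
    rw [← Finset.sum_div, Finset.sum_sub_distrib, hδsum, hsum]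
    simp
  have expand : ∑ i, (1/2 : ℝ) * Real.log (l i / δ i) -
      ∑ i, (1/2 : ℝ) * Real.log (l i / min ξ (l i)) =
      -(1/2 : ℝ) * ∑ i, (Real.log (δ i) - Real.log (min ξ (l i))) := by
    rw [← Finset.sum_sub_distrib, Finset.mul_sum]
    apply Finset.sum_congr rfl
    intro i _
    rw [Real.log_div (hpos i).ne' (hδpos i).ne', Real.log_div (hpos i).ne' (hm i).ne']
    ring
  linarith
end
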